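/- The Minkowski sum of two sharp hybrid zonotopes is sharp: if conv(Z₁) = R(Z₁) and conv(Z₂) = R(Z₂), then the standard Minkowski sum hybrid zonotope Z₁ ⊕ Z₂ (concatenating generators and block-diagonal constraints) satisfies conv(Z₁ ⊕ Z₂) = R(Z₁ ⊕ Z₂). -/

import Mathlib

open Matrix Set Pointwise

/-- A hybrid zonotope with given generators, center and constraints. -/
def hybZono {ι γ β κ : Type*} [Fintype γ] [Fintype β]
    (Gc : Matrix ι γ ℝ) (Gb : Matrix ι β ℝ) (c : ι → ℝ)
    (Ac : Matrix κ γ ℝ) (Ab : Matrix κ β ℝ) (b : κ → ℝ) : Set (ι → ℝ) :=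
  {x | ∃ (ξc : γ → ℝ) (ξb : β → ℝ),
      (∀ i, ξc i ∈ Icc (-1 : ℝ) 1) ∧ (∀ i, ξb i = -1 ∨ ξb i = 1) ∧
      Ac.mulVec ξc + Ab.mulVec ξb = b ∧
      x = Gc.mulVec ξc + Gb.mulVec ξb + c}

/-- The convex relaxation of a hybrid zonotope representation. -/
def hybZonoRelax {ι γ β κ : Type*} [Fintype γ] [Fintype β]
    (Gc : Matrix ι γ ℝ) (Gb : Matrix ι β ℝ) (c : ι → ℝ)
    (Ac : Matrix κ γ ℝ) (Ab : Matrix κ β ℝ) (b : κ → ℝ) : Set (ι → ℝ) :=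
  {x | ∃ (ξc : γ → ℝ) (ξb : β → ℝ),
      (∀ i, ξc i ∈ Icc (-1 : ℝ) 1) ∧ (∀ i, ξb i ∈ Icc (-1 : ℝ) 1) ∧
      Ac.mulVec ξc + Ab.mulVec ξb = b ∧
      x = Gc.mulVec ξc + Gb.mulVec ξb + c}


lemma genSum {ι γ₁ γ₂ β₁ β₂ κ₁ κ₂ : Type*} [Fintype γ₁] [Fintype γ₂]
    [Fintype β₁] [Fintype β₂] (P : ℝ → Prop)
    (Gc₁ : Matrix ι γ₁ ℝ) (Gb₁ : Matrix ι β₁ ℝ) (c₁ : ι → ℝ)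
    (Ac₁ : Matrix κ₁ γ₁ ℝ) (Ab₁ : Matrix κ₁ β₁ ℝ) (b₁ : κ₁ → ℝ)
    (Gc₂ : Matrix ι γ₂ ℝ) (Gb₂ : Matrix ι β₂ ℝ) (c₂ : ι → ℝ)
    (Ac₂ : Matrix κ₂ γ₂ ℝ) (Ab₂ : Matrix κ₂ β₂ ℝ) (b₂ : κ₂ → ℝ) :
    {x : ι → ℝ | ∃ (ξc : γ₁ ⊕ γ₂ → ℝ) (ξb : β₁ ⊕ β₂ → ℝ),
      (∀ i, ξc i ∈ Icc (-1 : ℝ) 1) ∧ (∀ i, P (ξb i)) ∧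
      (Matrix.fromBlocks Ac₁ 0 0 Ac₂).mulVec ξc +
        (Matrix.fromBlocks Ab₁ 0 0 Ab₂).mulVec ξb = Sum.elim b₁ b₂ ∧
      x = (Matrix.fromCols Gc₁ Gc₂).mulVec ξc +
        (Matrix.fromCols Gb₁ Gb₂).mulVec ξb + (c₁ + c₂)} =
    {x : ι → ℝ | ∃ (ξc : γ₁ → ℝ) (ξb : β₁ → ℝ),
      (∀ i, ξc i ∈ Icc (-1 : ℝ) 1) ∧ (∀ i, P (ξb i)) ∧
      Ac₁.mulVec ξc + Ab₁.mulVec ξb = b₁ ∧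
      x = Gc₁.mulVec ξc + Gb₁.mulVec ξb + c₁} +
    {x : ι → ℝ | ∃ (ξc : γ₂ → ℝ) (ξb : β₂ → ℝ),
      (∀ i, ξc i ∈ Icc (-1 : ℝ) 1) ∧ (∀ i, P (ξb i)) ∧
      Ac₂.mulVec ξc + Ab₂.mulVec ξb = b₂ ∧
      x = Gc₂.mulVec ξc + Gb₂.mulVec ξb + c₂} := by
  ext x
  constructor
  · rintro ⟨ξc, ξb, hc, hb, hA, rfl⟩
    rw [Matrix.fromBlocks_mulVec, Matrix.fromBlocks_mulVec] at hA
    simp only [Matrix.zero_mulVec, add_zero, zero_add] at hA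
    refine ⟨_, ⟨ξc ∘ Sum.inl, ξb ∘ Sum.inl, fun i => hc _, fun i => hb _,
      funext fun k => by simpa using congrFun hA (Sum.inl k), rfl⟩,
      _, ⟨ξc ∘ Sum.inr, ξb ∘ Sum.inr, fun i => hc _, fun i => hb _,
      funext fun k => by simpa using congrFun hA (Sum.inr k), rfl⟩, ?_⟩
    funext k
    simp [Matrix.mulVec, dotProduct, Fintype.sum_sum_type, Matrix.fromCols,
      Finset.sum_add_distrib]
    ring
  · rintro ⟨a, ⟨ξc₁, ξb₁, hc₁, hb₁, hA₁, rfl⟩, a', ⟨ξc₂, ξb₂, hc₂, hb₂, hA₂, rfl⟩, rfl⟩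
    refine ⟨Sum.elim ξc₁ ξc₂, Sum.elim ξb₁ ξb₂,
      fun i => by cases i <;> simp [hc₁, hc₂],
      fun i => by cases i <;> simp [hb₁, hb₂], ?_, ?_⟩
    · rw [Matrix.fromBlocks_mulVec, Matrix.fromBlocks_mulVec]
      funext k
      cases k with
      | inl k => simpa [Sum.elim_comp_inl, Sum.elim_comp_inr] using congrFun hA₁ k
      | inr k => simpa [Sum.elim_comp_inl, Sum.elim_comp_inr] using congrFun hA₂ k
    · rw [Matrix.fromCols_mulVec_sumElim, Matrix.fromCols_mulVec_sumElim]
      funext k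
      simp [Pi.add_apply]
      ring

/-- The standard Minkowski-sum hybrid zonotope (concatenated generators,
summed centers, block-diagonal constraints) of two sharp hybrid zonotopes is
sharp. -/
theorem minkowskiSum_preserves_sharpness
    (n ng₁ ng₂ nb₁ nb₂ nc₁ nc₂ : ℕ)
    (Gc₁ : Matrix (Fin n) (Fin ng₁) ℝ) (Gb₁ : Matrix (Fin n) (Fin nb₁) ℝ)
    (c₁ : Fin n → ℝ)
    (Ac₁ : Matrix (Fin nc₁) (Fin ng₁) ℝ) (Ab₁ : Matrix (Fin nc₁) (Fin nb₁) ℝ)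
    (b₁ : Fin nc₁ → ℝ)
    (Gc₂ : Matrix (Fin n) (Fin ng₂) ℝ) (Gb₂ : Matrix (Fin n) (Fin nb₂) ℝ)
    (c₂ : Fin n → ℝ)
    (Ac₂ : Matrix (Fin nc₂) (Fin ng₂) ℝ) (Ab₂ : Matrix (Fin nc₂) (Fin nb₂) ℝ)
    (b₂ : Fin nc₂ → ℝ)
    (h₁ : convexHull ℝ (hybZono Gc₁ Gb₁ c₁ Ac₁ Ab₁ b₁) =
      hybZonoRelax Gc₁ Gb₁ c₁ Ac₁ Ab₁ b₁)
    (h₂ : convexHull ℝ (hybZono Gc₂ Gb₂ c₂ Ac₂ Ab₂ b₂) =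
      hybZonoRelax Gc₂ Gb₂ c₂ Ac₂ Ab₂ b₂) :
    convexHull ℝ (hybZono (Matrix.fromCols Gc₁ Gc₂)
        (Matrix.fromCols Gb₁ Gb₂) (c₁ + c₂)
        (Matrix.fromBlocks Ac₁ 0 0 Ac₂) (Matrix.fromBlocks Ab₁ 0 0 Ab₂)
        (Sum.elim b₁ b₂)) =
      hybZonoRelax (Matrix.fromCols Gc₁ Gc₂)
        (Matrix.fromCols Gb₁ Gb₂) (c₁ + c₂)
        (Matrix.fromBlocks Ac₁ 0 0 Ac₂) (Matrix.fromBlocks Ab₁ 0 0 Ab₂)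
        (Sum.elim b₁ b₂) := by
  have e1 := genSum (fun t => t = -1 ∨ t = 1) Gc₁ Gb₁ c₁ Ac₁ Ab₁ b₁ Gc₂ Gb₂ c₂ Ac₂ Ab₂ b₂
  have e2 := genSum (fun t => t ∈ Icc (-1 : ℝ) 1) Gc₁ Gb₁ c₁ Ac₁ Ab₁ b₁ Gc₂ Gb₂ c₂ Ac₂ Ab₂ b₂
  rw [show (hybZono (Matrix.fromCols Gc₁ Gc₂) (Matrix.fromCols Gb₁ Gb₂) (c₁ + c₂)
      (Matrix.fromBlocks Ac₁ 0 0 Ac₂) (Matrix.fromBlocks Ab₁ 0 0 Ab₂) (Sum.elim b₁ b₂)) =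
      hybZono Gc₁ Gb₁ c₁ Ac₁ Ab₁ b₁ + hybZono Gc₂ Gb₂ c₂ Ac₂ Ab₂ b₂ from e1,
    show (hybZonoRelax (Matrix.fromCols Gc₁ Gc₂) (Matrix.fromCols Gb₁ Gb₂) (c₁ + c₂)
      (Matrix.fromBlocks Ac₁ 0 0 Ac₂) (Matrix.fromBlocks Ab₁ 0 0 Ab₂) (Sum.elim b₁ b₂)) =
      hybZonoRelax Gc₁ Gb₁ c₁ Ac₁ Ab₁ b₁ + hybZonoRelax Gc₂ Gb₂ c₂ Ac₂ Ab₂ b₂ from e2,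
    convexHull_add, h₁, h₂]
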